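/- Strohmer–Vershynin one-step identity (uniform sampling, unit rows): if T ⊆ {1,…,m} is nonempty, ‖a_i‖ = 1 and ⟨a_i, x⟩ = b_i for all i ∈ T, then (1/|T|)Σ_{i∈T} ‖x_k + (b_i - ⟨a_i,x_k⟩)a_i - x‖² = ‖x_k - x‖² - (1/|T|)‖A_T(x_k - x)‖² ≤ (1 - σ_min(A_T)²/|T|)‖x_k - x‖². -/

import Mathlib

open RealInnerProductSpace Finset

/-- The smallest singular value of the row-submatrix `A_T`. -/
noncomputable def sigmaSubMin {m n : ℕ} (a : Fin m → EuclideanSpace ℝ (Fin n))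
    (T : Finset (Fin m)) : ℝ :=
  sInf {t : ℝ | ∃ y : EuclideanSpace ℝ (Fin n), ‖y‖ = 1 ∧
    t = Real.sqrt (∑ i ∈ T, ⟪a i, y⟫ ^ 2)}

lemma sigmaSubMin_nonneg {m n : ℕ} (a : Fin m → EuclideanSpace ℝ (Fin n))
    (T : Finset (Fin m)) : 0 ≤ sigmaSubMin a T := by
  unfold sigmaSubMin
  rcases Set.eq_empty_or_nonempty {t : ℝ | ∃ y : EuclideanSpace ℝ (Fin n), ‖y‖ = 1 ∧
      t = Real.sqrt (∑ i ∈ T, ⟪a i, y⟫ ^ 2)} with h | h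
  · rw [h, Real.sInf_empty]
  · exact le_csInf h (by rintro t ⟨y, hy, rfl⟩; positivity)

lemma sigmaSubMin_sq_le {m n : ℕ} (a : Fin m → EuclideanSpace ℝ (Fin n))
    (T : Finset (Fin m)) (e : EuclideanSpace ℝ (Fin n)) :
    sigmaSubMin a T ^ 2 * ‖e‖ ^ 2 ≤ ∑ i ∈ T, ⟪a i, e⟫ ^ 2 := by
  rcases eq_or_ne e 0 with rfl | he
  · simp
  · have hne : ‖e‖ ≠ 0 := norm_ne_zero_iff.mpr he
    set y : EuclideanSpace ℝ (Fin n) := ‖e‖⁻¹ • e with hy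
    have hyn : ‖y‖ = 1 := by
      rw [hy, norm_smul, norm_inv, norm_norm, inv_mul_cancel₀ hne]
    have hmem : Real.sqrt (∑ i ∈ T, ⟪a i, y⟫ ^ 2) ∈
        {t : ℝ | ∃ y : EuclideanSpace ℝ (Fin n), ‖y‖ = 1 ∧
          t = Real.sqrt (∑ i ∈ T, ⟪a i, y⟫ ^ 2)} := ⟨y, hyn, rfl⟩
    have hbdd : BddBelow {t : ℝ | ∃ y : EuclideanSpace ℝ (Fin n), ‖y‖ = 1 ∧
        t = Real.sqrt (∑ i ∈ T, ⟪a i, y⟫ ^ 2)} :=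
      ⟨0, by rintro t ⟨z, hz, rfl⟩; positivity⟩
    have hle : sigmaSubMin a T ≤ Real.sqrt (∑ i ∈ T, ⟪a i, y⟫ ^ 2) :=
      csInf_le hbdd hmem
    have hsq : sigmaSubMin a T ^ 2 ≤ ∑ i ∈ T, ⟪a i, y⟫ ^ 2 := by
      have h2 := pow_le_pow_left₀ (sigmaSubMin_nonneg a T) hle 2
      rwa [Real.sq_sqrt (Finset.sum_nonneg fun i _ => sq_nonneg _)] at h2
    have hsum : ∑ i ∈ T, ⟪a i, y⟫ ^ 2 = (‖e‖ ^ 2)⁻¹ * ∑ i ∈ T, ⟪a i, e⟫ ^ 2 := by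
      rw [Finset.mul_sum]
      refine Finset.sum_congr rfl fun i _ => ?_
      rw [hy, real_inner_smul_right]
      ring
    rw [hsum] at hsq
    have hpos : (0:ℝ) < ‖e‖ ^ 2 := by positivity
    calc sigmaSubMin a T ^ 2 * ‖e‖ ^ 2
        ≤ ((‖e‖ ^ 2)⁻¹ * ∑ i ∈ T, ⟪a i, e⟫ ^ 2) * ‖e‖ ^ 2 := by
          exact mul_le_mul_of_nonneg_right hsq hpos.le
      _ = ∑ i ∈ T, ⟪a i, e⟫ ^ 2 := by field_simp

/-- Strohmer–Vershynin one-step identity for uniform sampling over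
unit-norm rows, together with the resulting contraction estimate. -/
theorem strohmer_vershynin_one_step {m n : ℕ} (a : Fin m → EuclideanSpace ℝ (Fin n))
    (x xk : EuclideanSpace ℝ (Fin n)) (b : Fin m → ℝ) (T : Finset (Fin m))
    (hT : T.Nonempty)
    (ha : ∀ i ∈ T, ‖a i‖ = 1)
    (hcons : ∀ i ∈ T, ⟪a i, x⟫ = b i) :
    (1 / T.card : ℝ) * ∑ i ∈ T, ‖xk + (b i - ⟪a i, xk⟫) • a i - x‖ ^ 2 =
        ‖xk - x‖ ^ 2 - (1 / T.card : ℝ) * ∑ i ∈ T, ⟪a i, xk - x⟫ ^ 2 ∧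
      (1 / T.card : ℝ) * ∑ i ∈ T, ‖xk + (b i - ⟪a i, xk⟫) • a i - x‖ ^ 2 ≤
        (1 - sigmaSubMin a T ^ 2 / T.card) * ‖xk - x‖ ^ 2 := by
  have hcard : (0:ℝ) < T.card := by exact_mod_cast Finset.card_pos.mpr hT
  have hterm : ∀ i ∈ T, ‖xk + (b i - ⟪a i, xk⟫) • a i - x‖ ^ 2
      = ‖xk - x‖ ^ 2 - ⟪a i, xk - x⟫ ^ 2 := by
    intro i hi
    have hb : b i = ⟪a i, x⟫ := (hcons i hi).symm
    have hv : xk + (b i - ⟪a i, xk⟫) • a i - x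
        = (xk - x) - ⟪a i, xk - x⟫ • a i := by
      rw [hb, inner_sub_right]
      module
    rw [hv, norm_sub_sq_real, real_inner_smul_right, norm_smul, real_inner_comm,
      mul_pow]
    rw [ha i hi]
    simp [Real.norm_eq_abs, sq_abs]
    ring
  have hsum : ∑ i ∈ T, ‖xk + (b i - ⟪a i, xk⟫) • a i - x‖ ^ 2
      = T.card * ‖xk - x‖ ^ 2 - ∑ i ∈ T, ⟪a i, xk - x⟫ ^ 2 := by
    rw [Finset.sum_congr rfl hterm, Finset.sum_sub_distrib, Finset.sum_const,
      nsmul_eq_mul]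
  have heq : (1 / T.card : ℝ) * ∑ i ∈ T, ‖xk + (b i - ⟪a i, xk⟫) • a i - x‖ ^ 2 =
      ‖xk - x‖ ^ 2 - (1 / T.card : ℝ) * ∑ i ∈ T, ⟪a i, xk - x⟫ ^ 2 := by
    rw [hsum]; field_simp
  refine ⟨heq, ?_⟩
  rw [heq]
  have hkey := sigmaSubMin_sq_le a T (xk - x)
  have : sigmaSubMin a T ^ 2 / T.card * ‖xk - x‖ ^ 2
      ≤ (1 / T.card : ℝ) * ∑ i ∈ T, ⟪a i, xk - x⟫ ^ 2 := by
    rw [div_mul_eq_mul_div, one_div, inv_mul_eq_div, div_le_div_iff_of_pos_right hcard]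
    exact hkey
  nlinarith [this]
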